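/- arXiv:0912.1580 — 3 statements merged into one kernel-verified Lean document; each statement's English description precedes it below -/
import Mathlib

section
/- Let E be a real inner product space, let u ∈ E with ‖u‖ = 1, and let p ∈ E. Then the function t ↦ ‖p − t•u‖ − t tends to −⟪p, u⟫ as t → ∞. -/
open Filter

/-- The Busemann function of the ray `c(t) = t • u` in a real inner product space:
`‖p - t•u‖ - t → -⟪p, u⟫` as `t → ∞`. -/
theorem ballhull_stmt1 {E : Type*} [NormedAddCommGroup E] [InnerProductSpace ℝ E]
    (u : E) (hu : ‖u‖ = 1) (p : E) :
    Tendsto (fun t : ℝ => ‖p - t • u‖ - t) atTop (nhds (-(inner ℝ p u : ℝ))) := by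
  have hnum : Tendsto (fun t : ℝ => ‖p‖ ^ 2 * t⁻¹ - 2 * (inner ℝ p u : ℝ)) atTop
      (nhds (-2 * (inner ℝ p u : ℝ))) := by
    have := (tendsto_inv_atTop_zero.const_mul (‖p‖ ^ 2)).sub_const (2 * (inner ℝ p u : ℝ))
    simpa using this
  have hden : Tendsto (fun t : ℝ => ‖t⁻¹ • p - u‖ + 1) atTop (nhds 2) := by
    have h1 : Tendsto (fun t : ℝ => t⁻¹ • p) atTop (nhds (0 : E)) := by
      simpa using Tendsto.smul_const
        (tendsto_inv_atTop_zero : Tendsto (fun t : ℝ => t⁻¹) atTop (nhds 0)) p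
    have h2 : Tendsto (fun t : ℝ => ‖t⁻¹ • p - u‖) atTop (nhds ‖(0 : E) - u‖) :=
      ((h1.sub_const u).norm)
    have : ‖(0 : E) - u‖ = 1 := by simpa using hu
    rw [this] at h2
    have h3 := h2.add_const 1
    norm_num at h3
    exact h3
  have hdiv := hnum.div hden (by norm_num)
  have hlim : (-2 * (inner ℝ p u : ℝ)) / 2 = -(inner ℝ p u : ℝ) := by ring
  rw [hlim] at hdiv
  refine hdiv.congr' ?_
  filter_upwards [eventually_gt_atTop 0] with t ht
  have htne : t ≠ 0 := ne_of_gt ht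
  have hnorm : ‖p - t • u‖ = t * ‖t⁻¹ • p - u‖ := by
    have hts : t • (t⁻¹ • p - u) = p - t • u := by
      rw [smul_sub, smul_smul, mul_inv_cancel₀ htne, one_smul]
    rw [← hts, norm_smul, Real.norm_of_nonneg ht.le]
  have hpos : (0:ℝ) < ‖p - t • u‖ + t := by positivity
  have hsq : ‖p - t • u‖ ^ 2 = ‖p‖ ^ 2 - 2 * t * (inner ℝ p u : ℝ) + t ^ 2 := by
    rw [norm_sub_sq_real, norm_smul, inner_smul_right, Real.norm_of_nonneg ht.le, hu]
    ring
  have key : ‖p - t • u‖ - t = (‖p‖ ^ 2 - 2 * t * (inner ℝ p u : ℝ)) / (‖p - t • u‖ + t) := by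
    rw [eq_div_iff hpos.ne']
    nlinarith [hsq]
  rw [key, hnorm]
  simp only [Pi.div_apply]
  field_simp
end

section
/- Let p be a 2×2 real symmetric positive definite matrix with det p = 1, and let λ₁ ≥ λ₂ > 0 be its eigenvalues. Then √((log λ₁)² + (log λ₂)²) = √2 · log( (tr p)/2 + √( ((tr p)/2)² − 1 ) ). In other words, the Riemannian distance d(p, I) in PD(2) equals √2 times the hyperbolic distance arcosh((tr p)/2). -/
open Matrix

/-- For a 2×2 real symmetric positive definite matrix `p` with `det p = 1` and
eigenvalues `l1 ≥ l2 > 0`, the Riemannian distance from `p` to `I`, namely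
`√((log l1)² + (log l2)²)`, equals `√2 · log(tr p / 2 + √((tr p / 2)² - 1))`,
i.e. `√2` times the hyperbolic distance `arcosh(tr p / 2)`. -/
theorem ballhull_stmt5 (p : Matrix (Fin 2) (Fin 2) ℝ) (hp : p.PosDef) (hdet : p.det = 1)
    (l1 l2 : ℝ) (hord : l2 ≤ l1) (hpos : 0 < l2)
    (heig : Finset.univ.val.map hp.1.eigenvalues = ({l1, l2} : Multiset ℝ)) :
    Real.sqrt (Real.log l1 ^ 2 + Real.log l2 ^ 2) =
      Real.sqrt 2 * Real.log (p.trace / 2 + Real.sqrt ((p.trace / 2) ^ 2 - 1)) := by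
  have hH := hp.1
  have hprod : l1 * l2 = 1 := by
    have h := hH.det_eq_prod_eigenvalues
    rw [hdet] at h
    have h2 : (∏ i, hH.eigenvalues i) = l1 * l2 := by
      have h3 : (Finset.univ.val.map hH.eigenvalues).prod = ({l1, l2} : Multiset ℝ).prod := by
        rw [heig]
      simpa [Finset.prod, mul_comm] using h3
    have h' : (1:ℝ) = ∏ i, hH.eigenvalues i := by exact_mod_cast h
    rw [h2] at h'
    exact h'.symm
  have htr : p.trace = l1 + l2 := by
    have h : p.trace = ∑ i, hH.eigenvalues i := by
      rw [hH.trace_eq_sum_eigenvalues]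
      simp
    have h2 : (∑ i, hH.eigenvalues i) = l1 + l2 := by
      have h3 : (Finset.univ.val.map hH.eigenvalues).sum = ({l1, l2} : Multiset ℝ).sum := by
        rw [heig]
      simpa [Finset.sum] using h3
    rw [h2] at h
    exact_mod_cast h
  have hl1 : 1 ≤ l1 := by
    nlinarith
  have hl1pos : 0 < l1 := lt_of_lt_of_le one_pos hl1
  have hlog2 : Real.log l2 = - Real.log l1 := by
    have : Real.log (l1 * l2) = 0 := by rw [hprod, Real.log_one]
    rw [Real.log_mul (ne_of_gt hl1pos) (ne_of_gt hpos)] at this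
    linarith
  have hsq : ((l1 + l2) / 2) ^ 2 - 1 = ((l1 - l2) / 2) ^ 2 := by
    nlinarith
  rw [htr, hsq, Real.sqrt_sq (by linarith : (0:ℝ) ≤ (l1 - l2) / 2)]
  have harg : (l1 + l2) / 2 + (l1 - l2) / 2 = l1 := by ring
  rw [harg, hlog2]
  rw [show Real.log l1 ^ 2 + (-Real.log l1) ^ 2 = 2 * Real.log l1 ^ 2 by ring]
  rw [Real.sqrt_mul (by norm_num), Real.sqrt_sq (Real.log_nonneg hl1)]
end

section
/- For a 2×2 real symmetric positive definite matrix p = [[x, w], [w, y]] with det p = 1, define φ(p) to be the point w/y + i·(1/y) of the upper half-plane. Then for all 2×2 real symmetric positive definite p, q with det p = det q = 1, the Riemannian distance satisfies d(p, q) = √2 · dist_{ℍ}(φ(p), φ(q)), where dist_{ℍ} is the hyperbolic distance on the upper half-plane. -/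
open Matrix Filter

open scoped Classical in
/-- The positive semidefinite square root of a matrix (junk value `1` if the matrix is
not positive semidefinite). -/
noncomputable def pdSqrt {n : ℕ} (p : Matrix (Fin n) (Fin n) ℝ) : Matrix (Fin n) (Fin n) ℝ :=
  if h : p.PosSemidef then h.1.eigenvectorUnitary.1 * diagonal ((↑) ∘ (√·) ∘ h.1.eigenvalues) *
    (star h.1.eigenvectorUnitary : Matrix (Fin n) (Fin n) ℝ) else 1

open scoped Classical in
/-- The eigenvalues of a real symmetric matrix (junk value `0` if the matrix is not
symmetric). -/
noncomputable def symEigenvalues {n : ℕ} (A : Matrix (Fin n) (Fin n) ℝ) : Fin n → ℝ :=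
  if h : A.IsHermitian then h.eigenvalues else 0

/-- The Riemannian distance on the space of n×n real symmetric positive definite
matrices: `d(p,q) = √(∑ᵢ (log λᵢ)²)` where `λᵢ` are the eigenvalues of
`p^{-1/2} q p^{-1/2}`. -/
noncomputable def pdDist {n : ℕ} (p q : Matrix (Fin n) (Fin n) ℝ) : ℝ :=
  Real.sqrt (∑ i, Real.log (symEigenvalues ((pdSqrt p)⁻¹ * q * (pdSqrt p)⁻¹) i) ^ 2)

lemma trace_eq_sum_eig {n : Type*} [Fintype n] [DecidableEq n] {A : Matrix n n ℝ}
    (hA : A.IsHermitian) : A.trace = ∑ i, hA.eigenvalues i := by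
  conv_lhs => rw [hA.spectral_theorem, Unitary.conjStarAlgAut_apply]
  rw [Matrix.trace_mul_cycle]
  rw [show (star (IsHermitian.eigenvectorUnitary hA : Matrix n n ℝ)) *
      (IsHermitian.eigenvectorUnitary hA : Matrix n n ℝ) = 1 from
    Unitary.coe_star_mul_self _, one_mul, Matrix.trace_diagonal]
  simp [Function.comp]

/-- The determinant-1 submanifold of PD(2) is the hyperbolic plane rescaled by √2:
under the map `[[x,w],[w,y]] ↦ w/y + i/y` into the upper half-plane, the Riemannian
distance equals `√2` times the hyperbolic distance. -/
theorem ballhull_stmt7 (p q : Matrix (Fin 2) (Fin 2) ℝ) (hp : p.PosDef) (hq : q.PosDef)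
    (hdp : p.det = 1) (hdq : q.det = 1)
    (zp zq : UpperHalfPlane)
    (hzp : (zp : ℂ) = (p 1 0) / (p 1 1) + (1 / (p 1 1)) * Complex.I)
    (hzq : (zq : ℂ) = (q 1 0) / (q 1 1) + (1 / (q 1 1)) * Complex.I) :
    pdDist p q = Real.sqrt 2 * dist zp zq := by
  classical
  have hpsd := hp.posSemidef
  set S := pdSqrt p with hSdef
  have hSe : S = (hpsd.1.eigenvectorUnitary : Matrix (Fin 2) (Fin 2) ℝ) *
      diagonal ((↑) ∘ (√·) ∘ hpsd.1.eigenvalues) *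
      (star hpsd.1.eigenvectorUnitary : Matrix (Fin 2) (Fin 2) ℝ) := dif_pos hpsd
  have hS : S.PosSemidef := by
    rw [hSe]
    have hD : (diagonal ((↑) ∘ (√·) ∘ hpsd.1.eigenvalues) : Matrix (Fin 2) (Fin 2) ℝ).PosSemidef :=
      posSemidef_diagonal_iff.mpr fun i => by simp [Real.sqrt_nonneg]
    have := hD.mul_mul_conjTranspose_same (hpsd.1.eigenvectorUnitary : Matrix (Fin 2) (Fin 2) ℝ)
    simpa [Unitary.coe_star, Matrix.star_eq_conjTranspose] using this
  have hSS : S * S = p := by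
    rw [hSe]
    conv_rhs => rw [hpsd.1.spectral_theorem, Unitary.conjStarAlgAut_apply]
    have hU : (star hpsd.1.eigenvectorUnitary : Matrix (Fin 2) (Fin 2) ℝ) *
        (hpsd.1.eigenvectorUnitary : Matrix (Fin 2) (Fin 2) ℝ) = 1 := Unitary.coe_star_mul_self _
    have hDD : (diagonal ((↑) ∘ (√·) ∘ hpsd.1.eigenvalues) : Matrix (Fin 2) (Fin 2) ℝ) *
        diagonal ((↑) ∘ (√·) ∘ hpsd.1.eigenvalues) = diagonal ((↑) ∘ hpsd.1.eigenvalues) := by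
      rw [diagonal_mul_diagonal]
      congr 1; funext i
      simp [Real.mul_self_sqrt (hpsd.eigenvalues_nonneg i)]
    simp only [Matrix.mul_assoc]
    rw [← Matrix.mul_assoc _ _ (diagonal _ * _), hU, Matrix.one_mul, ← Matrix.mul_assoc (diagonal _),
      hDD]
    rfl
  have hdS : S.det = 1 := by
    have h2 : S.det * S.det = 1 := by rw [← Matrix.det_mul, hSS, hdp]
    have hnn : 0 ≤ S.det := by
      rw [hS.isHermitian.det_eq_prod_eigenvalues]
      exact Finset.prod_nonneg fun i _ => hS.eigenvalues_nonneg i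
    nlinarith
  set A := S⁻¹ * q * S⁻¹ with hAdef
  have hSinv : (S⁻¹)ᴴ = S⁻¹ := by rw [Matrix.conjTranspose_nonsing_inv, hS.isHermitian.eq]
  have hApsd : A.PosSemidef := by
    have := hq.posSemidef.mul_mul_conjTranspose_same S⁻¹
    rwa [hSinv] at this
  have hA : A.IsHermitian := hApsd.isHermitian
  have hdetA : A.det = 1 := by
    rw [hAdef, Matrix.det_mul, Matrix.det_mul, Matrix.det_nonsing_inv, hdS, hdq]
    simp
  have htrA : A.trace = (p⁻¹ * q).trace := by
    rw [hAdef, Matrix.trace_mul_cycle, ← Matrix.mul_inv_rev, hSS]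
  -- eigenvalues
  set l := hA.eigenvalues with hl
  have hprod : l 0 * l 1 = 1 := by
    have := hA.det_eq_prod_eigenvalues
    rw [hdetA, Fin.prod_univ_two] at this
    exact_mod_cast this.symm
  have h0 : 0 < l 0 := lt_of_le_of_ne (hApsd.eigenvalues_nonneg 0)
    (by rintro h; rw [← h] at hprod; simp at hprod)
  have h1 : l 1 = (l 0)⁻¹ := by field_simp; linarith [hprod]
  have hsum : l 0 + l 1 = A.trace := by
    rw [trace_eq_sum_eig hA, Fin.sum_univ_two]
  -- entries
  set a := p 0 0; set b := p 1 0; set c := p 1 1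
  set a' := q 0 0; set b' := q 1 0; set c' := q 1 1
  have hpsymm : p 0 1 = b := by
    have := congr_fun (congr_fun hp.isHermitian 0) 1
    simpa [Matrix.conjTranspose_apply] using this.symm
  have hqsymm : q 0 1 = b' := by
    have := congr_fun (congr_fun hq.isHermitian 0) 1
    simpa [Matrix.conjTranspose_apply] using this.symm
  have hne : (Pi.single 1 1 : Fin 2 → ℝ) ≠ 0 := by
    intro hcon
    have h1 := congr_fun hcon (1 : Fin 2)
    rw [Pi.single_eq_same] at h1
    simp at h1
  have hc : 0 < c := by
    have h := hp.dotProduct_mulVec_pos hne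
    simpa [dotProduct, Matrix.mulVec, Fin.sum_univ_two, Pi.single_apply] using h
  have hc' : 0 < c' := by
    have h := hq.dotProduct_mulVec_pos hne
    simpa [dotProduct, Matrix.mulVec, Fin.sum_univ_two, Pi.single_apply] using h
  have hdetp : a * c - b * b = 1 := by
    have := Matrix.det_fin_two p
    rw [hdp, hpsymm] at this
    linarith
  have hdetq : a' * c' - b' * b' = 1 := by
    have := Matrix.det_fin_two q
    rw [hdq, hqsymm] at this
    linarith
  -- trace of p⁻¹ q in entries
  have hpinv : p⁻¹ = p.adjugate := by
    rw [Matrix.inv_def, hdp]; simp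
  have htr : (p⁻¹ * q).trace = c * a' + a * c' - 2 * (b * b') := by
    rw [hpinv, Matrix.adjugate_fin_two, Matrix.trace_fin_two]
    simp [Matrix.mul_apply, Fin.sum_univ_two, hpsymm, hqsymm]
    ring
  -- upper half plane data
  have himp : zp.im = 1 / c := by
    rw [← UpperHalfPlane.coe_im, hzp]; simp
  have himq : zq.im = 1 / c' := by
    rw [← UpperHalfPlane.coe_im, hzq]; simp
  have hdsq : dist (zp : ℂ) (zq : ℂ) ^ 2 = (b / c - b' / c') ^ 2 + (1 / c - 1 / c') ^ 2 := by
    rw [Complex.dist_eq, Complex.sq_norm, Complex.normSq_apply, hzp, hzq]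
    simp
    ring
  have hcoshd : Real.cosh (dist zp zq) = (c * a' + a * c' - 2 * (b * b')) / 2 := by
    rw [UpperHalfPlane.cosh_dist, hdsq, himp, himq]
    have ha : a = (1 + b * b) / c := by field_simp; linarith
    have ha' : a' = (1 + b' * b') / c' := by field_simp; linarith
    rw [ha, ha']
    field_simp
    ring
  -- cosh of |log l 0|
  have hcoshl : Real.cosh |Real.log (l 0)| = (c * a' + a * c' - 2 * (b * b')) / 2 := by
    rw [Real.cosh_abs, Real.cosh_log h0, ← h1]
    rw [hsum, htrA, htr]
  have hdist : |Real.log (l 0)| = dist zp zq :=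
    Real.cosh_strictMonoOn.injOn (Set.mem_Ici.mpr (abs_nonneg _))
      (Set.mem_Ici.mpr dist_nonneg) (hcoshl.trans hcoshd.symm)
  -- pdDist
  have hpd : pdDist p q = Real.sqrt (Real.log (l 0) ^ 2 + Real.log (l 1) ^ 2) := by
    unfold pdDist
    rw [show pdSqrt p = S from rfl]
    unfold symEigenvalues
    rw [dif_pos hA, Fin.sum_univ_two]
  rw [hpd, h1, Real.log_inv]
  rw [show Real.log (l 0) ^ 2 + (-Real.log (l 0)) ^ 2 = 2 * Real.log (l 0) ^ 2 by ring]
  rw [Real.sqrt_mul (by norm_num), Real.sqrt_sq_eq_abs, hdist]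
end
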